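/- Let c : L → ℕ be capacities on a laminar family L over a finite ground set, α ∈ (0,1), and let c′ : L′ → ℕ (L′ ⊆ L) be constructed by processing bins in non-increasing cardinality order, discarding a bin A whenever c(A) ≥ c′(B) for the minimal already-kept bin B ⊇ A, and otherwise setting c′(A) := min(c(A), ⌈α·c′(B)⌉). Then: (i) for all A ⊊ B in L′, c′(A) ≤ ⌈α·c′(B)⌉; (ii) every set independent under (L′, c′) is independent under (L, c); and (iii) c′(A) ≥ α·c(A) for every A ∈ L′. -/
import Mathlib

private lemma spar_meas_lt {U : Type*} [DecidableEq U] (L : Finset (Finset U))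
    {A B : Finset U} (hB : B ∈ L) (hAB : A ⊂ B) :
    (L.filter (fun C => B ⊂ C)).card < (L.filter (fun C => A ⊂ C)).card := by
  apply Finset.card_lt_card
  constructor
  · intro C hC
    rw [Finset.mem_filter] at *
    exact ⟨hC.1, hAB.trans hC.2⟩
  · intro hsub
    have : B ∈ L.filter (fun C => A ⊂ C) := Finset.mem_filter.mpr ⟨hB, hAB⟩
    have := hsub this
    rw [Finset.mem_filter] at this
    exact (ssubset_irrefl B) this.2

noncomputable def spar {U : Type*} [Fintype U] [DecidableEq U]
    (L : Finset (Finset U)) (c : Finset U → ℕ) (α : ℝ) (A : Finset U) : ℕ × Bool :=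
  let K := (L.filter (fun B => A ⊂ B)).attach.filter
    (fun B => (spar L c α B.1).2)
  if h : K.Nonempty then
    let m := K.inf' h (fun B => (spar L c α B.1).1)
    if m ≤ c A then (c A, false) else (min (c A) ⌈α * (m : ℝ)⌉₊, true)
  else (c A, true)
termination_by (L.filter (fun B => A ⊂ B)).card
decreasing_by
  all_goals first
    | exact spar_meas_lt L (Finset.mem_filter.mp B.2).1 (Finset.mem_filter.mp B.2).2
    | exact spar_meas_lt L (Finset.mem_filter.mp a.2).1 (Finset.mem_filter.mp a.2).2

/-- Specification lemma for `spar`. -/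
private lemma spar_spec {U : Type*} [Fintype U] [DecidableEq U]
    (L : Finset (Finset U)) (c : Finset U → ℕ) (α : ℝ) (A : Finset U) :
    ((∀ B ∈ L, A ⊂ B → (spar L c α B).2 = false) ∧ spar L c α A = (c A, true)) ∨
    (∃ B ∈ L, A ⊂ B ∧ (spar L c α B).2 = true ∧
      (∀ C ∈ L, A ⊂ C → (spar L c α C).2 = true → (spar L c α B).1 ≤ (spar L c α C).1) ∧
      spar L c α A = (if (spar L c α B).1 ≤ c A then (c A, false)
        else (min (c A) ⌈α * ((spar L c α B).1 : ℝ)⌉₊, true))) := by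
  rw [spar.eq_def]
  set K := (L.filter (fun B => A ⊂ B)).attach.filter
    (fun B => (spar L c α B.1).2) with hK
  by_cases h : K.Nonempty
  · right
    obtain ⟨b, hb, hbmin⟩ := Finset.exists_mem_eq_inf' h (fun B => (spar L c α B.1).1)
    have hb' := Finset.mem_filter.mp hb
    have hb'' := Finset.mem_filter.mp b.2
    refine ⟨b.1, hb''.1, hb''.2, hb'.2, ?_, ?_⟩
    · intro C hC hAC hCk
      have hCmem : (⟨C, Finset.mem_filter.mpr ⟨hC, hAC⟩⟩ :
          {x // x ∈ L.filter (fun B => A ⊂ B)}) ∈ K := by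
        rw [hK]
        exact Finset.mem_filter.mpr ⟨Finset.mem_attach _ _, hCk⟩
      rw [← hbmin]
      exact Finset.inf'_le _ hCmem
    · simp only [dif_pos h, ← hbmin]
  · left
    constructor
    · intro B hB hAB
      by_contra hfalse
      have : (⟨B, Finset.mem_filter.mpr ⟨hB, hAB⟩⟩ :
          {x // x ∈ L.filter (fun B => A ⊂ B)}) ∈ K := by
        rw [hK]
        refine Finset.mem_filter.mpr ⟨Finset.mem_attach _ _, ?_⟩
        simpa using hfalse
      exact h ⟨_, this⟩
    · simp only [dif_neg h]

private lemma spar_fst_le {U : Type*} [Fintype U] [DecidableEq U]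
    (L : Finset (Finset U)) (c : Finset U → ℕ) (α : ℝ) (A : Finset U) :
    (spar L c α A).1 ≤ c A := by
  rcases spar_spec L c α A with ⟨_, heq⟩ | ⟨B, _, _, _, _, heq⟩
  · rw [heq]
  · rw [heq]
    split <;> simp

theorem stmt_12 {U : Type*} [Fintype U] [DecidableEq U]
    (L : Finset (Finset U))
    (hlaminar : ∀ A ∈ L, ∀ B ∈ L, A ⊆ B ∨ B ⊆ A ∨ Disjoint A B)
    (c : Finset U → ℕ) (α : ℝ) (hα0 : 0 < α) (hα1 : α < 1) :
    ∃ L' : Finset (Finset U), L' ⊆ L ∧ ∃ c' : Finset U → ℕ,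
      (∀ A ∈ L', ∀ B ∈ L', A ⊂ B → c' A ≤ ⌈α * (c' B : ℝ)⌉₊) ∧
      (∀ S : Finset U, (∀ A ∈ L', (S ∩ A).card ≤ c' A) →
        ∀ A ∈ L, (S ∩ A).card ≤ c A) ∧
      (∀ A ∈ L', α * (c A : ℝ) ≤ (c' A : ℝ)) := by
  classical
  refine ⟨L.filter (fun A => (spar L c α A).2), Finset.filter_subset _ _,
    fun A => (spar L c α A).1, ?_, ?_, ?_⟩
  · -- (i)
    intro A hA B hB hAB
    obtain ⟨hAL, hAk⟩ := Finset.mem_filter.mp hA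
    obtain ⟨hBL, hBk⟩ := Finset.mem_filter.mp hB
    show (spar L c α A).1 ≤ ⌈α * ((spar L c α B).1 : ℝ)⌉₊
    rcases spar_spec L c α A with ⟨hall, _⟩ | ⟨Bm, hBmL, hABm, hBmk, hmin, heq⟩
    · exact absurd (hall B hBL hAB) (by simp [hBk])
    · rw [heq]
      by_cases hle : (spar L c α Bm).1 ≤ c A
      · exfalso
        rw [heq] at hAk
        simp [hle] at hAk
      · simp only [if_neg hle]
        refine le_trans (min_le_right _ _) (Nat.ceil_le_ceil ?_)
        have := hmin B hBL hAB hBk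
        exact mul_le_mul_of_nonneg_left (by exact_mod_cast this) (le_of_lt hα0)
  · -- (ii)
    intro S hS A hA
    by_cases hk : (spar L c α A).2 = true
    · have hA' : A ∈ L.filter (fun A => (spar L c α A).2) :=
        Finset.mem_filter.mpr ⟨hA, hk⟩
      exact le_trans (hS A hA') (spar_fst_le L c α A)
    · rcases spar_spec L c α A with ⟨_, heq⟩ | ⟨B, hBL, hAB, hBk, _, heq⟩
      · rw [heq] at hk; simp at hk
      · rw [heq] at hk
        by_cases hle : (spar L c α B).1 ≤ c A
        · have hB' : B ∈ L.filter (fun A => (spar L c α A).2) :=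
            Finset.mem_filter.mpr ⟨hBL, hBk⟩
          calc (S ∩ A).card ≤ (S ∩ B).card :=
                Finset.card_le_card
                  (Finset.inter_subset_inter (Finset.Subset.refl S) hAB.subset)
            _ ≤ (spar L c α B).1 := hS B hB'
            _ ≤ c A := hle
        · simp [hle] at hk
  · -- (iii)
    intro A hA
    obtain ⟨hAL, hAk⟩ := Finset.mem_filter.mp hA
    have hα1' : α ≤ 1 := le_of_lt hα1
    have hbase : α * (c A : ℝ) ≤ (c A : ℝ) := by
      nlinarith [Nat.cast_nonneg (α := ℝ) (c A)]
    show α * (c A : ℝ) ≤ ((spar L c α A).1 : ℝ)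
    rcases spar_spec L c α A with ⟨_, heq⟩ | ⟨B, hBL, hAB, hBk, _, heq⟩
    · rw [heq]; exact hbase
    · rw [heq]
      by_cases hle : (spar L c α B).1 ≤ c A
      · rw [heq] at hAk; simp [hle] at hAk
      · simp only [if_neg hle]
        push_cast
        rw [le_min_iff]
        refine ⟨hbase, ?_⟩
        calc α * (c A : ℝ) ≤ α * ((spar L c α B).1 : ℝ) := by
              apply mul_le_mul_of_nonneg_left _ (le_of_lt hα0)
              exact_mod_cast (le_of_not_ge hle)
          _ ≤ (⌈α * ((spar L c α B).1 : ℝ)⌉₊ : ℝ) := Nat.le_ceil _
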